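/- Let G be an infinite group with a subgroup K ≤ G and an element h ∈ G such that K is properly contained in hKh^{-1}. Let A be a set with at least two distinct elements 0 and 1, and consider the shift action of G on A^G defined by (g·x)(h') = x(g^{-1}h') for all g, h' ∈ G and x ∈ A^G. Let χ_K ∈ A^G be the indicator function of K (χ_K(g) = 1 if g ∈ K, and 0 otherwise). Then the stabilizer of χ_K under the shift action equals K, and consequently Aut_G(G·χ_K) is properly contained in End_G(G·χ_K), where G·χ_K is the G-orbit of χ_K. -/

import Mathlib

open scoped Classical

/-- The monoid of all `G`-equivariant transformations of `X`, as a submonoid of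
`Function.End X` (composition of functions). -/
def gEnd (G X : Type*) [Group G] [MulAction G X] : Submonoid (Function.End X) where
  carrier := {f | ∀ (g : G) (x : X), f (g • x) = g • f x}
  one_mem' := fun _ _ => rfl
  mul_mem' := fun {f₁ f₂} h₁ h₂ g x => by
    show f₁ (f₂ (g • x)) = g • f₁ (f₂ x)
    rw [h₂, h₁]

/-- The group of all bijective `G`-equivariant transformations of `X`, as a subgroup of
`Equiv.Perm X`. -/
def gAut (G X : Type*) [Group G] [MulAction G X] : Subgroup (Equiv.Perm X) where
  carrier := {f | ∀ (g : G) (x : X), f (g • x) = g • f x}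
  one_mem' := fun _ _ => rfl
  mul_mem' := fun {f₁ f₂} h₁ h₂ g x => by
    show f₁ (f₂ (g • x)) = g • f₁ (f₂ x)
    rw [h₂, h₁]
  inv_mem' := fun {f} hf g x => f.injective (by
    have hfi : ∀ y, f (f⁻¹ y) = y := fun y => Equiv.apply_symm_apply f y
    rw [hfi, hf, hfi])

/-- The conjugate subgroup `g K g⁻¹`. -/
def conjSub {G : Type*} [Group G] (g : G) (K : Subgroup G) : Subgroup G :=
  Subgroup.map (MulAut.conj g).toMonoidHom K

/-- The orbit of a point, as a `G`-invariant subset (`SubMulAction`). -/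
def orbitSub (G : Type*) {X : Type*} [Group G] [MulAction G X] (x : X) : SubMulAction G X where
  carrier := MulAction.orbit G x
  smul_mem' := fun g z hz => by
    obtain ⟨k, hk⟩ := hz
    exact ⟨g * k, by simp only [← hk, mul_smul]⟩

/-- The shift action of a group `G` on `A^G`: `(g • x)(h) = x(g⁻¹h)`. -/
instance shiftMulAction (G A : Type*) [Group G] : MulAction G (G → A) where
  smul g x := fun h => x (g⁻¹ * h)
  one_smul x := by funext h; show x (1⁻¹ * h) = x h; rw [inv_one, one_mul]
  mul_smul g g' x := by
    funext h
    show x ((g * g')⁻¹ * h) = x (g'⁻¹ * (g⁻¹ * h))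
    rw [mul_inv_rev, mul_assoc]

/-- If `K < hKh⁻¹` in an infinite group `G`, then for the shift action
of `G` on `A^G` (with `|A| ≥ 2`), the stabilizer of the indicator function `χ_K` equals
`K`, and `Aut_G(G·χ_K)` is properly contained in `End_G(G·χ_K)`. -/
theorem stmt18 {G : Type*} [Group G] [Infinite G] (K : Subgroup G) (h : G)
    (hK : K < conjSub h K) (A : Type*) (a b : A) (hab : a ≠ b) :
    MulAction.stabilizer G (fun g => if g ∈ K then b else a : G → A) = K ∧
    ∃ τ ∈ gEnd G ↑(orbitSub G (fun g => if g ∈ K then b else a : G → A)),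
      ¬Function.Bijective τ := by
  set χ : G → A := (fun g => if g ∈ K then b else a) with hχ
  have smul_apply : ∀ (g : G) (x : G → A) (h' : G), (g • x) h' = x (g⁻¹ * h') :=
    fun _ _ _ => rfl
  have key : ∀ g : G, g • χ = χ ↔ g ∈ K := by
    intro g
    constructor
    · intro hg
      have hg2 := congrFun hg g
      rw [smul_apply, inv_mul_cancel] at hg2
      by_contra hgK
      simp only [hχ, one_mem, if_true, hgK, if_false] at hg2
      exact hab hg2.symm
    · intro hg
      funext h'
      rw [smul_apply]
      simp only [hχ, K.mul_mem_cancel_left (inv_mem hg)]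
  have smul_eq_iff : ∀ g g' : G, g • χ = g' • χ ↔ g'⁻¹ * g ∈ K := by
    intro g g'
    rw [← key (g'⁻¹ * g), mul_smul, inv_smul_eq_iff]
  have hstab : MulAction.stabilizer G χ = K := by
    ext g
    rw [MulAction.mem_stabilizer_iff, key]
  refine ⟨hstab, ?_⟩
  -- element of hKh⁻¹ not in K
  obtain ⟨s, hsconj, hsK⟩ := SetLike.exists_of_lt hK
  obtain ⟨k, hkK, hks⟩ := hsconj
  have hks' : h * k * h⁻¹ = s := hks
  -- the endomorphism
  let τ : ↥(orbitSub G χ) → ↥(orbitSub G χ) := fun y =>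
    ⟨(Classical.choose (MulAction.mem_orbit_iff.mp (y.2 : y.1 ∈ MulAction.orbit G χ)) * h) • χ,
      MulAction.mem_orbit χ _⟩
  have welldef : ∀ (g : G) (hy : g • χ ∈ MulAction.orbit G χ),
      (τ ⟨g • χ, hy⟩ : G → A) = (g * h) • χ := by
    intro g hy
    show ((Classical.choose (MulAction.mem_orbit_iff.mp hy) * h) • χ : G → A) = (g * h) • χ
    set g' := Classical.choose (MulAction.mem_orbit_iff.mp hy) with hg'
    have hspec : g' • χ = g • χ := Classical.choose_spec (MulAction.mem_orbit_iff.mp hy)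
    have hmem : g⁻¹ * g' ∈ K := (smul_eq_iff g' g).mp hspec
    have hmem2 : (g * h)⁻¹ * (g' * h) ∈ conjSub h⁻¹ K := by
      refine ⟨g⁻¹ * g', hmem, ?_⟩
      show h⁻¹ * (g⁻¹ * g') * h⁻¹⁻¹ = (g * h)⁻¹ * (g' * h)
      group
    have hle : conjSub h⁻¹ K ≤ K := by
      intro z hz
      obtain ⟨w, hwK, hwz⟩ := hz
      have hwz' : h⁻¹ * w * h⁻¹⁻¹ = z := hwz
      have : z ∈ conjSub h⁻¹ (conjSub h K) := ⟨w, hK.le hwK, hwz⟩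
      obtain ⟨u, ⟨v, hvK, hvu⟩, huz⟩ := this
      have hvu' : h * v * h⁻¹ = u := hvu
      have huz' : h⁻¹ * u * h⁻¹⁻¹ = z := huz
      have : z = v := by rw [← huz', ← hvu']; group
      rwa [this]
    exact (smul_eq_iff (g' * h) (g * h)).mpr (hle hmem2)
  refine ⟨τ, ?_, ?_⟩
  · -- equivariance
    intro g y
    obtain ⟨y, hy⟩ := y
    obtain ⟨g₀, hg₀⟩ := MulAction.mem_orbit_iff.mp (hy : y ∈ MulAction.orbit G χ)
    subst hg₀
    apply Subtype.ext
    have h1 : g • (⟨g₀ • χ, hy⟩ : ↥(orbitSub G χ)) =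
        ⟨(g * g₀) • χ, MulAction.mem_orbit χ _⟩ := by
      apply Subtype.ext
      show g • (g₀ • χ) = (g * g₀) • χ
      rw [mul_smul]
    rw [h1]
    show (τ ⟨(g * g₀) • χ, _⟩ : G → A) = g • (τ ⟨g₀ • χ, hy⟩ : G → A)
    rw [welldef (g * g₀), welldef g₀ hy, ← mul_smul, mul_assoc]
  · -- not injective
    intro hbij
    have h0 : ((1 : G) • χ : G → A) ∈ MulAction.orbit G χ := MulAction.mem_orbit χ 1
    have h1 : (s • χ : G → A) ∈ MulAction.orbit G χ := MulAction.mem_orbit χ s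
    have heq : τ ⟨(1 : G) • χ, h0⟩ = τ ⟨s • χ, h1⟩ := by
      apply Subtype.ext
      rw [welldef 1 h0, welldef s h1]
      apply (smul_eq_iff (1 * h) (s * h)).mpr
      have : (s * h)⁻¹ * (1 * h) = k⁻¹ := by rw [← hks']; group
      rw [this]
      exact inv_mem hkK
    have := hbij.1 heq
    have hval : ((1 : G) • χ : G → A) = s • χ := congrArg Subtype.val this
    have : (1 : G)⁻¹ * s ∈ K := by
      have := (smul_eq_iff s 1).mp hval.symm
      simpa using this
    simp only [inv_one, one_mul] at this
    exact hsK this
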